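/- arXiv:1905.11243 — 2 statements merged into one kernel-verified Lean document; each statement's English description precedes it below -/
import Mathlib

section
/- Let L be a completely solvable Leibniz A-algebra with L = L² ∔ B, where B is a subalgebra of L, and let A be a minimal ideal of L. Then: (i) A ⊆ L² or A ⊆ B; (ii) A ⊆ B if and only if A ⊆ Z(L), in which case dim A = 1; and (iii) A ⊆ L² if and only if [A,L] = A. -/
/-- A (right) Leibniz algebra structure on an `F`-vector space `L`:
a bilinear bracket satisfying `[x,[y,z]] = [[x,y],z] - [[x,z],y]`. -/
structure LeibnizAlg (F : Type*) (L : Type*) [Field F] [AddCommGroup L] [Module F L] where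
  bracket : L →ₗ[F] L →ₗ[F] L
  leibniz : ∀ x y z : L,
    bracket x (bracket y z) = bracket (bracket x y) z - bracket (bracket x z) y

namespace LeibnizAlg

variable {F : Type*} {L : Type*} [Field F] [AddCommGroup L] [Module F L]

/-- The product `[M, N]` of two subspaces: the span of all brackets `[m, n]`. -/
def prod (A : LeibnizAlg F L) (M N : Submodule F L) : Submodule F L :=
  Submodule.span F {z : L | ∃ m ∈ M, ∃ n ∈ N, z = A.bracket m n}

/-- A subalgebra: a subspace closed under the product. -/
def IsSubalgebra (A : LeibnizAlg F L) (S : Submodule F L) : Prop :=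
  A.prod S S ≤ S

/-- A (two-sided) ideal: `[I, L] ⊆ I` and `[L, I] ⊆ I`. -/
def IsIdeal (A : LeibnizAlg F L) (I : Submodule F L) : Prop :=
  A.prod I ⊤ ≤ I ∧ A.prod ⊤ I ≤ I

/-- Lower central series of a subspace `U`: `lcs U 0 = U = U¹`,
`lcs U k = U^(k+1)`, i.e. `lcs U (k+1) = [lcs U k, U]`. -/
def lcs (A : LeibnizAlg F L) (U : Submodule F L) : ℕ → Submodule F L
  | 0 => U
  | k + 1 => A.prod (lcs A U k) U

/-- `U` is nilpotent: `U^(n+1) = 0` for some `n`. -/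
def IsNilpotentSub (A : LeibnizAlg F L) (U : Submodule F L) : Prop :=
  ∃ n : ℕ, A.lcs U n = ⊥

/-- `U` is abelian: `[U, U] = 0`. -/
def IsAbelian (A : LeibnizAlg F L) (U : Submodule F L) : Prop :=
  A.prod U U = ⊥

/-- An `A`-algebra: every nilpotent subalgebra is abelian. -/
def IsAAlgebra (A : LeibnizAlg F L) : Prop :=
  ∀ U : Submodule F L, A.IsSubalgebra U → A.IsNilpotentSub U → A.IsAbelian U

/-- Derived series: `derSeries 0 = L`, `derSeries (k+1) = [derSeries k, derSeries k]`. -/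
def derSeries (A : LeibnizAlg F L) : ℕ → Submodule F L
  | 0 => ⊤
  | k + 1 => A.prod (derSeries A k) (derSeries A k)

/-- `L` is solvable: some term of the derived series vanishes. -/
def IsSolvable (A : LeibnizAlg F L) : Prop :=
  ∃ n : ℕ, A.derSeries n = ⊥

/-- The centralizer `Z_L(U)` of a subspace `U`. -/
def centralizer (A : LeibnizAlg F L) (U : Submodule F L) : Submodule F L where
  carrier := {x : L | ∀ u ∈ U, A.bracket x u = 0 ∧ A.bracket u x = 0}
  add_mem' := by
    intro a b ha hb u hu
    refine ⟨?_, ?_⟩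
    · rw [map_add, LinearMap.add_apply, (ha u hu).1, (hb u hu).1, add_zero]
    · rw [map_add, (ha u hu).2, (hb u hu).2, add_zero]
  zero_mem' := by
    intro u hu
    refine ⟨?_, ?_⟩
    · rw [map_zero, LinearMap.zero_apply]
    · rw [map_zero]
  smul_mem' := by
    intro c a ha u hu
    refine ⟨?_, ?_⟩
    · rw [map_smul, LinearMap.smul_apply, (ha u hu).1, smul_zero]
    · rw [map_smul, (ha u hu).2, smul_zero]

/-- The centre of the subalgebra `M`: elements of `M` centralizing `M`. -/
def centerOf (A : LeibnizAlg F L) (M : Submodule F L) : Submodule F L :=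
  M ⊓ A.centralizer M

/-- `N` is the nilradical: the largest nilpotent ideal. -/
def IsNilradical (A : LeibnizAlg F L) (N : Submodule F L) : Prop :=
  A.IsIdeal N ∧ A.IsNilpotentSub N ∧
    ∀ I : Submodule F L, A.IsIdeal I → A.IsNilpotentSub I → I ≤ N

/-- A minimal ideal: a nonzero ideal containing no ideal other than `0` and itself. -/
def IsMinimalIdeal (A : LeibnizAlg F L) (I : Submodule F L) : Prop :=
  A.IsIdeal I ∧ I ≠ ⊥ ∧ ∀ J : Submodule F L, A.IsIdeal J → J ≤ I → J = ⊥ ∨ J = I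

/-- A maximal subalgebra. -/
def IsMaximalSubalgebra (A : LeibnizAlg F L) (M : Submodule F L) : Prop :=
  A.IsSubalgebra M ∧ M ≠ ⊤ ∧
    ∀ S : Submodule F L, A.IsSubalgebra S → M ≤ S → S = M ∨ S = ⊤

/-- `L` is φ-free: every ideal contained in all maximal subalgebras is zero. -/
def IsPhiFree (A : LeibnizAlg F L) : Prop :=
  ∀ I : Submodule F L, A.IsIdeal I →
    (∀ M : Submodule F L, A.IsMaximalSubalgebra M → I ≤ M) → I = ⊥

/-- `Asoc L`: the sum of the abelian minimal ideals. -/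
def asoc (A : LeibnizAlg F L) : Submodule F L :=
  sSup {I : Submodule F L | A.IsMinimalIdeal I ∧ A.IsAbelian I}

/-- A Cartan subalgebra: a nilpotent, self-normalizing subalgebra. -/
def IsCartan (A : LeibnizAlg F L) (C : Submodule F L) : Prop :=
  A.IsSubalgebra C ∧ A.IsNilpotentSub C ∧
    ∀ x : L, (∀ c ∈ C, A.bracket x c ∈ C ∧ A.bracket c x ∈ C) → x ∈ C

/-- A maximal nilpotent subalgebra. -/
def IsMaxNilpotentSubalgebra (A : LeibnizAlg F L) (U : Submodule F L) : Prop :=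
  A.IsSubalgebra U ∧ A.IsNilpotentSub U ∧
    ∀ V : Submodule F L, A.IsSubalgebra V → A.IsNilpotentSub V → U ≤ V → V = U

end LeibnizAlg

open Submodule Module LinearMap

section LA
variable {F V : Type*} [Field F] [AddCommGroup V] [Module F V]

/-- descent lemma: commuting locally-nilpotent family, W contained in sum of images ⇒ W = ⊥ -/
lemma la_descent {ι : Type*} [DecidableEq ι] (f : ι → Module.End F V) (s : Finset ι)
    (hc : ∀ i ∈ s, ∀ j ∈ s, Commute (f i) (f j))
    (W : Submodule F V)
    (hnil : ∀ i ∈ s, ∃ n, ∀ x ∈ W, ((f i)^n) x = 0)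
    (hW : W ≤ ⨆ i ∈ s, Submodule.map (f i) W) : W = ⊥ := by
  induction s using Finset.induction_on generalizing W with
  | empty => simpa using hW
  | @insert a s ha IH =>
    have hWa : ∀ i ∈ s, Commute (f i) (f a) := fun i hi =>
      hc i (Finset.mem_insert_of_mem hi) a (s.mem_insert_self a)
    have key : ∀ t (W : Submodule F V),
        (∀ i ∈ insert a s, ∃ n, ∀ x ∈ W, ((f i)^n) x = 0) →
        (W ≤ ⨆ i ∈ insert a s, Submodule.map (f i) W) →
        (∀ x ∈ W, ((f a)^t) x = 0) → W = ⊥ := by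
      intro t
      induction t with
      | zero =>
        intro W _ _ h0
        rw [eq_bot_iff]; intro x hx
        simpa using h0 x hx
      | succ t IH2 =>
        intro W hnil hW ht
        set W' := Submodule.map ((f a)^t) W with hW'def
        have hW'bot : W' = ⊥ := by
          apply IH (fun i hi j hj =>
            hc i (Finset.mem_insert_of_mem hi) j (Finset.mem_insert_of_mem hj))
          · intro i hi
            obtain ⟨n, hn⟩ := hnil i (Finset.mem_insert_of_mem hi)
            refine ⟨n, ?_⟩
            rintro x ⟨y, hy, rfl⟩
            have hcomm : ((f i)^n) * ((f a)^t) = ((f a)^t) * ((f i)^n) :=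
              ((hWa i hi).pow_pow n t)
            calc ((f i)^n) (((f a)^t) y) = (((f i)^n) * ((f a)^t)) y := rfl
              _ = (((f a)^t) * ((f i)^n)) y := by rw [hcomm]
              _ = ((f a)^t) (((f i)^n) y) := rfl
              _ = 0 := by rw [hn y hy, map_zero]
          · calc W' ≤ Submodule.map ((f a)^t) (⨆ i ∈ insert a s, Submodule.map (f i) W) :=
                  Submodule.map_mono hW
              _ ≤ ⨆ i ∈ s, Submodule.map (f i) W' := by
                  rw [Submodule.map_iSup]
                  apply iSup_le; intro i
                  rw [Submodule.map_iSup]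
                  apply iSup_le; intro hi
                  rcases Finset.mem_insert.mp hi with rfl | hi'
                  · rintro x ⟨y, ⟨z, hz, rfl⟩, rfl⟩
                    have h1 : ((f i)^(t+1)) z = 0 := ht z hz
                    have hx0 : ((f i)^t) ((f i) z) = 0 := by
                      have : (f i ^ t) ((f i) z) = ((f i ^ t) * (f i)) z := rfl
                      rw [this, ← pow_succ]
                      exact h1
                    rw [hx0]; exact Submodule.zero_mem _
                  · rintro x ⟨y, ⟨z, hz, rfl⟩, rfl⟩
                    have hcomm : ((f a)^t) * (f i) = (f i) * ((f a)^t) :=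
                      ((hWa i hi').symm.pow_left t).eq
                    have heq : ((f a)^t) ((f i) z) = (f i) (((f a)^t) z) := by
                      calc ((f a)^t) ((f i) z) = (((f a)^t) * (f i)) z := rfl
                        _ = ((f i) * ((f a)^t)) z := by rw [hcomm]
                        _ = (f i) (((f a)^t) z) := rfl
                    rw [heq]
                    exact Submodule.mem_iSup_of_mem i (Submodule.mem_iSup_of_mem hi'
                      ⟨((f a)^t) z, ⟨z, hz, rfl⟩, rfl⟩)
        refine IH2 W hnil hW ?_
        intro x hx
        have hmem : ((f a)^t) x ∈ W' := ⟨x, hx, rfl⟩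
        rw [hW'bot] at hmem; simpa using hmem
    obtain ⟨n₀, hn₀⟩ := hnil a (s.mem_insert_self a)
    exact key n₀ W hnil hW hn₀

/-- single-operator Fitting lemma on a finite-dimensional space -/
lemma la_fitting_core {W : Type*} [AddCommGroup W] [Module F W] [FiniteDimensional F W]
    (T : Module.End F W) :
    LinearMap.ker (T^(finrank F W)) ⊓ LinearMap.range (T^(finrank F W)) = ⊥ ∧
    LinearMap.ker (T^(finrank F W)) ⊔ LinearMap.range (T^(finrank F W)) = ⊤ := by
  set n := finrank F W with hn
  have hdisj : LinearMap.ker (T^n) ⊓ LinearMap.range (T^n) = ⊥ := by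
    rw [eq_bot_iff]
    rintro x ⟨hk, y, rfl⟩
    have h2 : ((T^n) * (T^n)) y = 0 := hk
    have h2' : (T^(n+n)) y = 0 := by rw [pow_add]; exact h2
    have hker : LinearMap.ker (T^(n+n)) = LinearMap.ker (T^n) := by
      rw [Module.End.ker_pow_eq_ker_pow_finrank_of_le (le_add_self), hn]
    have : y ∈ LinearMap.ker (T^n) := hker ▸ h2'
    simpa using this
  refine ⟨hdisj, ?_⟩
  apply Submodule.eq_top_of_finrank_eq
  have h1 := Submodule.finrank_sup_add_finrank_inf_eq
    (LinearMap.ker (T^n)) (LinearMap.range (T^n))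
  rw [hdisj] at h1
  have h2 := LinearMap.finrank_range_add_finrank_ker (T^n)
  simp only [finrank_bot, add_zero] at h1
  omega

/-- Fitting decomposition of an invariant subspace `p` w.r.t. `T`, stated ambiently. -/
lemma la_fitting_sub [FiniteDimensional F V] (T : Module.End F V) (p : Submodule F V)
    (hT : ∀ x ∈ p, T x ∈ p) :
    ∃ q : Submodule F V, q ≤ p ∧
      ((p ⊓ LinearMap.ker (T^(finrank F V))) ⊔ q = p) ∧
      ((p ⊓ LinearMap.ker (T^(finrank F V))) ⊓ q = ⊥) ∧
      (∀ g : Module.End F V, Commute g T → (∀ x ∈ p, g x ∈ p) → ∀ x ∈ q, g x ∈ q) := by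
  set N := finrank F V with hN
  set n' := finrank F ↥p with hn'
  set T' : Module.End F ↥p := T.restrict hT with hT'
  have hpowT' : ∀ m : ℕ, T'^m = (T^m).restrict (Module.End.pow_apply_mem_of_forall_mem m hT) :=
    fun m => Module.End.pow_restrict m hT
  have hle : n' ≤ N := hN ▸ hn' ▸ Submodule.finrank_le p
  -- transfer of kernel
  have hkt : Submodule.map p.subtype (LinearMap.ker (T'^n'))
      = p ⊓ LinearMap.ker (T^N) := by
    rw [hpowT' n', LinearMap.ker_restrict, Submodule.map_comap_subtype]
    apply le_antisymm
    · refine le_inf inf_le_left ?_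
      refine le_trans inf_le_right ?_
      intro x hx
      have h0 : x ∈ LinearMap.ker (T ^ (n' + (N - n'))) := by
        rw [add_comm, pow_add]
        have : (T ^ (N - n')) ((T ^ n') x) = 0 := by
          rw [show ((T^n') x) = 0 from hx, map_zero]
        exact this
      rwa [show n' + (N - n') = N by omega] at h0
    · rintro x ⟨hxp, hxk⟩
      refine ⟨hxp, ?_⟩
      have hxk' : (⟨x, hxp⟩ : ↥p) ∈ LinearMap.ker (T'^N) := by
        rw [hpowT' N]
        apply Subtype.ext
        rw [LinearMap.restrict_coe_apply]
        simpa using hxk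
      have hstab : LinearMap.ker (T'^N) = LinearMap.ker (T'^n') := by
        rw [hn', Module.End.ker_pow_eq_ker_pow_finrank_of_le (hn' ▸ hle)]
      have h1 := hstab ▸ hxk'
      have h2 : ((T'^n') ⟨x, hxp⟩ : ↥p) = 0 := h1
      rw [hpowT' n'] at h2
      have h3 := congrArg (Subtype.val) h2
      rwa [LinearMap.restrict_coe_apply] at h3
  obtain ⟨hcore1, hcore2⟩ := la_fitting_core (F := F) T'
  rw [← hn'] at hcore1 hcore2
  refine ⟨Submodule.map p.subtype (LinearMap.range (T'^n')), Submodule.map_subtype_le _ _,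
    ?_, ?_, ?_⟩
  · rw [← hkt, ← Submodule.map_sup, hcore2]
    exact Submodule.map_subtype_top p
  · rw [← hkt, ← Submodule.map_inf _ (Submodule.injective_subtype p), hcore1,
      Submodule.map_bot]
  · intro g hg hgp x hx
    obtain ⟨y, ⟨u, rfl⟩, rfl⟩ := hx
    simp only [Submodule.subtype_apply]
    have hcy : ↑((T'^n') u) = (T^n') (↑u : V) := by
      rw [hpowT' n', LinearMap.restrict_coe_apply]
    rw [hcy]
    have hgc : g ((T^n') ↑u) = (T^n') (g ↑u) := by
      have := (hg.pow_right n').eq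
      calc g ((T^n') ↑u) = (g * (T^n')) ↑u := rfl
        _ = ((T^n') * g) ↑u := by rw [this]
        _ = (T^n') (g ↑u) := rfl
    rw [hgc]
    have hgu : g ↑u ∈ p := hgp _ u.2
    refine ⟨(T'^n') ⟨g ↑u, hgu⟩, ⟨⟨g ↑u, hgu⟩, rfl⟩, ?_⟩
    simp only [Submodule.subtype_apply, hpowT' n', LinearMap.restrict_coe_apply]

/-- joint Fitting decomposition for a commuting finite family -/
lemma la_joint_fitting [FiniteDimensional F V] {ι : Type*} [DecidableEq ι]
    (f : ι → Module.End F V) (s : Finset ι)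
    (hc : ∀ i ∈ s, ∀ j ∈ s, Commute (f i) (f j)) :
    ∃ I : Submodule F V,
      ((⨅ i ∈ s, LinearMap.ker ((f i)^(finrank F V))) ⊔ I = ⊤) ∧
      ((⨅ i ∈ s, LinearMap.ker ((f i)^(finrank F V))) ⊓ I = ⊥) ∧
      (∀ g : Module.End F V, (∀ i ∈ s, Commute g (f i)) → ∀ x ∈ I, g x ∈ I) := by
  induction s using Finset.induction_on with
  | empty => exact ⟨⊥, by simp, by simp, by simp⟩
  | @insert a s ha IH =>
    obtain ⟨I', hsup', hinf', hinv'⟩ := IH (fun i hi j hj =>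
      hc i (Finset.mem_insert_of_mem hi) j (Finset.mem_insert_of_mem hj))
    set K' := ⨅ i ∈ s, LinearMap.ker ((f i)^(finrank F V)) with hK'
    have hpres : ∀ g : Module.End F V, (∀ i ∈ s, Commute g (f i)) →
        ∀ x ∈ K', g x ∈ K' := by
      intro g hg x hx
      simp only [hK', Submodule.mem_iInf] at hx ⊢
      intro i hi
      have h := ((hg i hi).pow_right (finrank F V)).eq
      have hxi := hx i hi
      simp only [LinearMap.mem_ker] at hxi ⊢
      calc ((f i)^(finrank F V)) (g x) = (((f i)^(finrank F V)) * g) x := rfl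
        _ = (g * ((f i)^(finrank F V))) x := by rw [h]
        _ = g (((f i)^(finrank F V)) x) := rfl
        _ = 0 := by rw [hxi, map_zero]
    have haK' : ∀ x ∈ K', (f a) x ∈ K' :=
      hpres (f a) (fun i hi => hc a (s.mem_insert_self a) i (Finset.mem_insert_of_mem hi))
    obtain ⟨q, hqK', hsupq, hinfq, hinvq⟩ := la_fitting_sub (f a) K' haK'
    have h1 : (⨅ i ∈ insert a s, LinearMap.ker ((f i)^(finrank F V)))
        = K' ⊓ LinearMap.ker ((f a)^(finrank F V)) := by
      rw [Finset.iInf_insert, inf_comm]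
    refine ⟨I' ⊔ q, ?_, ?_, ?_⟩
    · rw [h1, sup_comm I' q, ← sup_assoc, hsupq, hsup']
    · rw [h1, eq_bot_iff]
      rintro x ⟨hxK, hxIq⟩
      obtain ⟨y, hy, z, hz, rfl⟩ := Submodule.mem_sup.mp hxIq
      have hxK' : y + z ∈ K' := hxK.1
      have hzK' : z ∈ K' := hqK' hz
      have hyK' : y ∈ K' := by
        have := Submodule.sub_mem K' hxK' hzK'
        simpa using this
      have hy0 : y = 0 := by
        have : y ∈ K' ⊓ I' := ⟨hyK', hy⟩
        rw [hinf'] at this; simpa using this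
      subst hy0
      have : (0 : V) + z ∈ (K' ⊓ LinearMap.ker ((f a)^(finrank F V))) ⊓ q := by
        refine ⟨hxK, ?_⟩
        simpa using hz
      rw [hinfq] at this
      simpa using this
    · intro g hg x hx
      obtain ⟨y, hy, z, hz, rfl⟩ := Submodule.mem_sup.mp hx
      rw [map_add]
      apply Submodule.add_mem_sup
      · exact hinv' g (fun i hi => hg i (Finset.mem_insert_of_mem hi)) y hy
      · exact hinvq g (hg a (s.mem_insert_self a))
          (hpres g (fun i hi => hg i (Finset.mem_insert_of_mem hi))) z hz

end LA

namespace LeibnizAlg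

variable {F : Type*} {L : Type*} [Field F] [AddCommGroup L] [Module F L]
variable (A : LeibnizAlg F L)

lemma prod_le_iff {M N P : Submodule F L} :
    A.prod M N ≤ P ↔ ∀ m ∈ M, ∀ n ∈ N, A.bracket m n ∈ P := by
  rw [prod, Submodule.span_le]
  constructor
  · intro h m hm n hn; exact h ⟨m, hm, n, hn, rfl⟩
  · rintro h z ⟨m, hm, n, hn, rfl⟩; exact h m hm n hn

lemma bracket_mem_prod {M N : Submodule F L} {m n : L} (hm : m ∈ M) (hn : n ∈ N) :
    A.bracket m n ∈ A.prod M N :=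
  Submodule.subset_span ⟨m, hm, n, hn, rfl⟩

lemma prod_mono {M M' N N' : Submodule F L} (h1 : M ≤ M') (h2 : N ≤ N') :
    A.prod M N ≤ A.prod M' N' := by
  rw [prod_le_iff]
  intro m hm n hn
  exact A.bracket_mem_prod (h1 hm) (h2 hn)

lemma der1_eq : A.derSeries 1 = A.prod ⊤ ⊤ := rfl

lemma bracket_mem_der1 (x y : L) : A.bracket x y ∈ A.derSeries 1 := by
  rw [der1_eq]; exact A.bracket_mem_prod Submodule.mem_top Submodule.mem_top

lemma prod_le_der1 (M N : Submodule F L) : A.prod M N ≤ A.derSeries 1 := by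
  rw [prod_le_iff]; intro m _ n _; exact A.bracket_mem_der1 m n

lemma lcs_one (U : Submodule F L) : A.lcs U 1 = A.prod U U := rfl

lemma lcs_two (U : Submodule F L) : A.lcs U 2 = A.prod (A.prod U U) U := rfl

lemma mem_center_iff {z : L} :
    z ∈ A.centerOf ⊤ ↔ ∀ x : L, A.bracket z x = 0 ∧ A.bracket x z = 0 := by
  constructor
  · intro hz x
    exact hz.2 x Submodule.mem_top
  · intro h
    exact ⟨Submodule.mem_top, fun u _ => h u⟩

end LeibnizAlg

namespace LeibnizAlg

open Submodule Module LinearMap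

variable {F : Type*} {L : Type*} [Field F] [AddCommGroup L] [Module F L]
variable (A : LeibnizAlg F L)

example {ι : Type*} [Fintype ι] (f : ι → Submodule F L) :
    ⨆ i ∈ Finset.univ, f i = ⨆ i, f i := by simp

theorem center_inf_der1 [FiniteDimensional F L] (hA : A.IsAAlgebra)
    (hcs : A.IsNilpotentSub (A.derSeries 1)) (B : Submodule F L) (hB : A.IsSubalgebra B)
    (hdisj : A.derSeries 1 ⊓ B = ⊥) (hsup : A.derSeries 1 ⊔ B = ⊤) :
    A.centerOf ⊤ ⊓ A.derSeries 1 = ⊥ := by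
  -- notation
  set D := A.derSeries 1 with hD
  -- D is an abelian ideal
  have hDD : A.prod D D = ⊥ := hA D (A.prod_le_der1 D D) hcs
  have hbr0 : ∀ u v : L, u ∈ D → v ∈ D → A.bracket u v = 0 := by
    intro u v hu hv
    have := A.bracket_mem_prod hu hv
    rw [hDD] at this; simpa using this
  have hBB : ∀ b c : L, b ∈ B → c ∈ B → A.bracket b c = 0 := by
    intro b c hb hc
    have h1 : A.bracket b c ∈ D ⊓ B :=
      ⟨A.bracket_mem_der1 b c, hB (A.bracket_mem_prod hb hc)⟩
    rw [hdisj] at h1; simpa using h1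
  have hmemD : ∀ x y : L, A.bracket x y ∈ D := fun x y => A.bracket_mem_der1 x y
  have hdecomp : ∀ x : L, ∃ u ∈ D, ∃ b ∈ B, x = u + b := by
    intro x
    have hx : x ∈ D ⊔ B := by rw [hsup]; exact Submodule.mem_top
    obtain ⟨u, hu, b, hb, rfl⟩ := Submodule.mem_sup.mp hx
    exact ⟨u, hu, b, hb, rfl⟩
  -- Step 1 : D = [D, B]
  have hstep1 : D ≤ A.prod D B ⊔ A.prod B D := by
    conv_lhs => rw [hD, der1_eq]
    rw [prod, Submodule.span_le]
    rintro z ⟨x, -, y, -, rfl⟩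
    obtain ⟨u, hu, b, hb, rfl⟩ := hdecomp x
    obtain ⟨v, hv, c, hc, rfl⟩ := hdecomp y
    have hexp : A.bracket (u + b) (v + c)
        = A.bracket u c + A.bracket b v := by
      simp only [map_add, LinearMap.add_apply]
      rw [hbr0 u v hu hv, hBB b c hb hc]
      abel
    rw [SetLike.mem_coe, hexp]
    exact Submodule.add_mem _
      (Submodule.mem_sup_left (A.bracket_mem_prod hu hc))
      (Submodule.mem_sup_right (A.bracket_mem_prod hb hv))
  have hstep2 : A.prod B D ≤ A.prod D B := by
    rw [prod_le_iff]
    intro b hb w hw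
    have hw' : w ∈ A.prod D B ⊔ A.prod B D := hstep1 hw
    have hgoal : A.prod D B ⊔ A.prod B D ≤ Submodule.comap (A.bracket b) (A.prod D B) := by
      apply sup_le
      · rw [prod, Submodule.span_le]
        rintro z ⟨u, hu, c, hc, rfl⟩
        rw [SetLike.mem_coe, Submodule.mem_comap, A.leibniz b u c, hBB b c hb hc]
        simp only [map_zero, LinearMap.zero_apply, sub_zero]
        exact A.bracket_mem_prod (hmemD b u) hc
      · rw [prod, Submodule.span_le]
        rintro z ⟨c, hc, v, hv, rfl⟩
        rw [SetLike.mem_coe, Submodule.mem_comap, A.leibniz b c v, hBB b c hb hc]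
        simp only [map_zero, LinearMap.zero_apply, zero_sub]
        exact Submodule.neg_mem _ (A.bracket_mem_prod (hmemD b v) hc)
    exact hgoal hw'
  have hDB : D = A.prod D B :=
    le_antisymm (le_trans hstep1 (sup_le le_rfl hstep2)) (A.prod_le_der1 D B)
  -- basis of B
  set m := finrank F ↥B with hm
  set bb := Module.finBasis F ↥B with hbb
  have hBspan : B = Submodule.span F (Set.range fun i => ((bb i : ↥B) : L)) := by
    conv_lhs => rw [← Submodule.map_subtype_top B]
    rw [← bb.span_eq, Submodule.map_span]
    congr 1
    ext x
    constructor
    · rintro ⟨y, ⟨i, rfl⟩, rfl⟩; exact ⟨i, rfl⟩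
    · rintro ⟨i, rfl⟩; exact ⟨bb i, ⟨i, rfl⟩, rfl⟩
  have hbbB : ∀ i, ((bb i : ↥B) : L) ∈ B := fun i => (bb i).2
  -- the commuting family of right multiplications
  set f : Fin m → Module.End F L := fun i => A.bracket.flip ((bb i : ↥B) : L) with hf
  have hf_apply : ∀ i x, f i x = A.bracket x ((bb i : ↥B) : L) := fun _ _ => rfl
  have hcomm : ∀ i j, Commute (f i) (f j) := by
    intro i j
    apply LinearMap.ext
    intro x
    have hlz := A.leibniz x ((bb j : ↥B) : L) ((bb i : ↥B) : L)
    rw [hBB _ _ (hbbB j) (hbbB i)] at hlz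
    simp only [map_zero] at hlz
    have : A.bracket (A.bracket x ((bb j : ↥B) : L)) ((bb i : ↥B) : L)
        = A.bracket (A.bracket x ((bb i : ↥B) : L)) ((bb j : ↥B) : L) := by
      have := hlz.symm
      rwa [sub_eq_zero] at this
    simpa [Module.End.mul_apply, hf_apply] using this
  -- left multiplications by B commute with the family
  have hlopB : ∀ b ∈ B, ∀ i, Commute (A.bracket b) (f i) := by
    intro b hb i
    apply LinearMap.ext
    intro x
    have hlz := A.leibniz b x ((bb i : ↥B) : L)
    rw [hBB _ _ hb (hbbB i)] at hlz
    simp only [map_zero, LinearMap.zero_apply, sub_zero] at hlz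
    simpa [Module.End.mul_apply, hf_apply] using hlz
  set N := finrank F L with hN
  set K' := ⨅ i ∈ (Finset.univ : Finset (Fin m)), LinearMap.ker ((f i)^N) with hK'
  have hK'mem : ∀ x, x ∈ K' ↔ ∀ i, ((f i)^N) x = 0 := by
    intro x
    simp [hK', Submodule.mem_iInf, LinearMap.mem_ker]
  have hK'inv : ∀ g : Module.End F L, (∀ i, Commute g (f i)) → ∀ x ∈ K', g x ∈ K' := by
    intro g hg x hx
    rw [hK'mem] at hx ⊢
    intro i
    have h := ((hg i).pow_right N).eq
    calc ((f i)^N) (g x) = (((f i)^N) * g) x := rfl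
      _ = (g * ((f i)^N)) x := by rw [h]
      _ = g (((f i)^N) x) := rfl
      _ = 0 := by rw [hx i, map_zero]
  set K0 := K' ⊓ D with hK0
  have hK0D : K0 ≤ D := inf_le_right
  have hK0r : ∀ k ∈ K0, ∀ b ∈ B, A.bracket k b ∈ K0 := by
    intro k hk b hb
    have hcomap : B ≤ Submodule.comap (A.bracket k) K0 := by
      rw [hBspan, Submodule.span_le]
      rintro z ⟨i, rfl⟩
      rw [SetLike.mem_coe, Submodule.mem_comap]
      exact ⟨hK'inv (f i) (fun j => hcomm i j) k hk.1, hmemD k _⟩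
    exact hcomap hb
  have hK0l : ∀ k ∈ K0, ∀ b ∈ B, A.bracket b k ∈ K0 := by
    intro k hk b hb
    exact ⟨hK'inv (A.bracket b) (hlopB b hb) k hk.1, hmemD b k⟩
  -- the subalgebra U = B ⊔ K0
  set U := B ⊔ K0 with hU
  have hprodUU : A.prod U U ≤ K0 := by
    rw [prod_le_iff]
    intro x hx y hy
    rw [hU] at hx hy
    obtain ⟨b, hb, k, hk, rfl⟩ := Submodule.mem_sup.mp hx
    obtain ⟨c, hc, k', hk', rfl⟩ := Submodule.mem_sup.mp hy
    have hexp : A.bracket (b + k) (c + k')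
        = A.bracket b k' + A.bracket k c := by
      simp only [map_add, LinearMap.add_apply]
      rw [hBB b c hb hc, hbr0 k k' (hK0D hk) (hK0D hk')]
      abel
    rw [hexp]
    exact Submodule.add_mem _ (hK0l k' hk' b hb) (hK0r k hk c hc)
  have hUsub : A.IsSubalgebra U := le_trans hprodUU le_sup_right
  -- the nilpotency filtration
  set M : ℕ → Submodule F L :=
    fun j => Nat.rec K0 (fun _ Mj => ⨆ i, Submodule.map (f i) Mj) j with hM
  have hM0 : M 0 = K0 := rfl
  have hMsucc : ∀ j, M (j+1) = ⨆ i, Submodule.map (f i) (M j) := fun _ => rfl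
  have hMK0 : ∀ j, M j ≤ K0 := by
    intro j
    induction j with
    | zero => exact le_rfl
    | succ j IH =>
      rw [hMsucc]
      apply iSup_le
      intro i
      rw [Submodule.map_le_iff_le_comap]
      intro y hy
      rw [Submodule.mem_comap]
      exact hK0r y (IH hy) _ (hbbB i)
  have hlcsM : ∀ j, A.lcs U (j+1) ≤ M j := by
    intro j
    induction j with
    | zero => exact hprodUU
    | succ j IH =>
      have h1 : A.lcs U (j+2) = A.prod (A.lcs U (j+1)) U := rfl
      rw [h1]
      refine le_trans (A.prod_mono IH le_rfl) ?_
      rw [prod_le_iff]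
      intro w hw x hx
      rw [hU] at hx
      obtain ⟨b, hb, k, hk, rfl⟩ := Submodule.mem_sup.mp hx
      have hexp : A.bracket w (b + k) = A.bracket w b := by
        simp only [map_add]
        rw [hbr0 w k (hK0D (hMK0 j hw)) (hK0D hk), add_zero]
      rw [hexp]
      have hcomap : B ≤ Submodule.comap (A.bracket w) (M (j+1)) := by
        rw [hBspan, Submodule.span_le]
        rintro z ⟨i, rfl⟩
        rw [SetLike.mem_coe, Submodule.mem_comap]
        have : f i w ∈ Submodule.map (f i) (M j) := ⟨w, hw, rfl⟩
        rw [hMsucc]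
        exact Submodule.mem_iSup_of_mem i this
      exact hcomap hb
  -- nilpotency via the descent lemma
  have hMbot : ∃ T, M T = ⊥ := by
    by_contra hcon
    push_neg at hcon
    have hdec : ∀ j, M (j+1) ≤ M j := by
      intro j
      induction j with
      | zero =>
        rw [hMsucc, hM0]
        apply iSup_le
        intro i
        rw [Submodule.map_le_iff_le_comap]
        intro y hy
        exact hK0r y hy _ (hbbB i)
      | succ j IH =>
        calc M (j+1+1) = ⨆ i, Submodule.map (f i) (M (j+1)) := hMsucc (j+1)
          _ ≤ ⨆ i, Submodule.map (f i) (M j) := iSup_mono fun i => Submodule.map_mono IH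
          _ = M (j+1) := (hMsucc j).symm
    have hstrict : ∀ j, M (j+1) < M j := by
      intro j
      refine lt_of_le_of_ne (hdec j) (fun heq => hcon j ?_)
      apply la_descent f Finset.univ (fun i _ j _ => hcomm i j) (M j)
      · intro i _
        refine ⟨N, fun x hx => ?_⟩
        have hxK' : x ∈ K' := (hMK0 j hx).1
        rw [hK'mem] at hxK'
        exact hxK' i
      · have h2 : (⨆ i, Submodule.map (f i) (M j))
            = ⨆ i ∈ Finset.univ, Submodule.map (f i) (M j) := by simp
        exact le_of_eq ((heq.symm.trans (hMsucc j)).trans h2)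
    have hr : ∀ j, finrank F (M (j+1)) < finrank F (M j) :=
      fun j => Submodule.finrank_lt_finrank_of_lt (hstrict j)
    have hsum : ∀ j, finrank F (M j) + j ≤ finrank F (M 0) := by
      intro j
      induction j with
      | zero => omega
      | succ j IH => have := hr j; omega
    have := hsum (finrank F (M 0) + 1)
    omega
  obtain ⟨T, hT⟩ := hMbot
  have hUnil : A.IsNilpotentSub U := ⟨T + 1, le_antisymm (hT ▸ hlcsM T) bot_le⟩
  have hUab : A.prod U U = ⊥ := hA U hUsub hUnil
  have hK0br : ∀ k ∈ K0, ∀ b ∈ B, A.bracket k b = 0 ∧ A.bracket b k = 0 := by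
    intro k hk b hb
    have hkU : k ∈ U := le_sup_right (a := B) hk
    have hbU : b ∈ U := le_sup_left (b := K0) hb
    constructor
    · have := A.bracket_mem_prod hkU hbU
      rw [hUab] at this; simpa using this
    · have := A.bracket_mem_prod hbU hkU
      rw [hUab] at this; simpa using this
  have hfK0 : ∀ i, ∀ k ∈ K0, f i k = 0 := fun i k hk => (hK0br k hk _ (hbbB i)).1
  -- joint Fitting decomposition
  obtain ⟨I, hIsup, hIinf, hIinv⟩ := la_joint_fitting f Finset.univ (fun i _ j _ => hcomm i j)
  rw [← hK'] at hIsup hIinf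
  have hfK' : ∀ i, ∀ x ∈ K', f i x ∈ K0 :=
    fun i x hx => ⟨hK'inv (f i) (fun j => hcomm i j) x hx, hmemD x _⟩
  have hDsup : D ≤ ⨆ i, Submodule.map (f i) D := by
    conv_lhs => rw [hDB]
    rw [prod_le_iff]
    intro u hu b hb
    have hcomap : B ≤ Submodule.comap (A.bracket u) (⨆ i, Submodule.map (f i) D) := by
      rw [hBspan, Submodule.span_le]
      rintro z ⟨i, rfl⟩
      rw [SetLike.mem_coe, Submodule.mem_comap]
      exact Submodule.mem_iSup_of_mem i ⟨u, hu, rfl⟩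
    exact hcomap hb
  have hDKI : D ≤ K0 ⊔ I := by
    refine le_trans hDsup (iSup_le fun i => ?_)
    refine le_trans (Submodule.map_mono (le_top : D ≤ ⊤)) ?_
    rw [← hIsup, Submodule.map_sup]
    apply sup_le
    · refine le_trans ?_ (le_sup_left : K0 ≤ K0 ⊔ I)
      rw [Submodule.map_le_iff_le_comap]
      intro x hx
      exact hfK' i x hx
    · refine le_trans ?_ (le_sup_right : I ≤ K0 ⊔ I)
      rw [Submodule.map_le_iff_le_comap]
      intro x hx
      exact hIinv (f i) (fun j _ => hcomm i j) x hx
  have hDI : D ≤ I := by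
    refine le_trans hDsup (iSup_le fun i => ?_)
    refine le_trans (Submodule.map_mono hDKI) ?_
    rw [Submodule.map_sup]
    apply sup_le
    · rw [Submodule.map_le_iff_le_comap]
      intro x hx
      rw [Submodule.mem_comap, hfK0 i x hx]
      exact Submodule.zero_mem I
    · rw [Submodule.map_le_iff_le_comap]
      intro x hx
      exact hIinv (f i) (fun j _ => hcomm i j) x hx
  have hK0bot : K0 = ⊥ := by
    rw [eq_bot_iff, ← hIinf]
    exact le_inf inf_le_left (le_trans inf_le_right hDI)
  -- conclusion
  rw [eq_bot_iff]
  intro z hz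
  have hzD : z ∈ D := hz.2
  have hzc := (A.mem_center_iff).mp hz.1
  have hzK' : z ∈ K' := by
    rw [hK'mem]
    intro i
    rcases Nat.eq_zero_or_pos N with h0 | hpos
    · have : Subsingleton L := by
        rw [hN] at h0
        exact Module.finrank_zero_iff.mp h0
      exact Subsingleton.elim _ _
    · obtain ⟨k, hk⟩ : ∃ k, N = k + 1 := ⟨N - 1, by omega⟩
      have hz0 : f i z = 0 := (hzc _).1
      rw [hk, pow_succ, Module.End.mul_apply, hz0, map_zero]
  have : z ∈ K0 := ⟨hzK', hzD⟩
  rw [hK0bot] at this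
  simpa using this

theorem center_le_B [FiniteDimensional F L] (hA : A.IsAAlgebra)
    (hcs : A.IsNilpotentSub (A.derSeries 1)) (B : Submodule F L) (hB : A.IsSubalgebra B)
    (hdisj : A.derSeries 1 ⊓ B = ⊥) (hsup : A.derSeries 1 ⊔ B = ⊤) :
    A.centerOf ⊤ ≤ B := by
  have hZD := A.center_inf_der1 hA hcs B hB hdisj hsup
  have hBB : ∀ b c : L, b ∈ B → c ∈ B → A.bracket b c = 0 := by
    intro b c hb hc
    have h1 : A.bracket b c ∈ A.derSeries 1 ⊓ B :=
      ⟨A.bracket_mem_der1 b c, hB (A.bracket_mem_prod hb hc)⟩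
    rw [hdisj] at h1; simpa using h1
  have hbr0 : ∀ u v : L, u ∈ A.derSeries 1 → v ∈ A.derSeries 1 → A.bracket u v = 0 := by
    intro u v hu hv
    have hab : A.prod (A.derSeries 1) (A.derSeries 1) = ⊥ :=
      hA _ (A.prod_le_der1 _ _) hcs
    have := A.bracket_mem_prod hu hv
    rw [hab] at this; simpa using this
  intro z hz
  have hzc := (A.mem_center_iff).mp hz
  obtain ⟨u, hu, b, hb, rfl⟩ : ∃ u ∈ A.derSeries 1, ∃ b ∈ B, z = u + b := by
    have hx : z ∈ A.derSeries 1 ⊔ B := by rw [hsup]; exact Submodule.mem_top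
    obtain ⟨u, hu, b, hb, rfl⟩ := Submodule.mem_sup.mp hx
    exact ⟨u, hu, b, hb, rfl⟩
  have huZ : u ∈ A.centerOf ⊤ := by
    rw [A.mem_center_iff]
    intro x
    obtain ⟨v, hv, c, hc, rfl⟩ : ∃ v ∈ A.derSeries 1, ∃ c ∈ B, x = v + c := by
      have hx : x ∈ A.derSeries 1 ⊔ B := by rw [hsup]; exact Submodule.mem_top
      obtain ⟨v, hv, c, hc, rfl⟩ := Submodule.mem_sup.mp hx
      exact ⟨v, hv, c, hc, rfl⟩
    constructor
    · -- [u, v + c] = [u,v] + [u,c] ; [u,c] = [u+b,c] - [b,c] = 0 - 0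
      have h1 : A.bracket (u + b) c = 0 := (hzc c).1
      have h2 : A.bracket (u + b) c = A.bracket u c + A.bracket b c := by
        simp [map_add, LinearMap.add_apply]
      have h3 : A.bracket u c = 0 := by
        rw [h2, hBB b c hb hc, add_zero] at h1; exact h1
      simp only [map_add]
      rw [hbr0 u v hu hv, h3, add_zero]
    · have h1 : A.bracket c (u + b) = 0 := (hzc c).2
      have h2 : A.bracket c (u + b) = A.bracket c u + A.bracket c b := by
        simp [map_add]
      have h3 : A.bracket c u = 0 := by
        rw [h2, hBB c b hc hb, add_zero] at h1; exact h1
      simp only [map_add, LinearMap.add_apply]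
      rw [hbr0 v u hv hu, h3, add_zero]
  have hu0 : u = 0 := by
    have : u ∈ A.centerOf ⊤ ⊓ A.derSeries 1 := ⟨huZ, hu⟩
    rw [hZD] at this; simpa using this
  rw [hu0, zero_add]
  exact hb

end LeibnizAlg



/-- Let `L = L² ∔ B` be a completely solvable Leibniz A-algebra, `B` a
subalgebra, and `W` a minimal ideal of `L`.  Then:
(i) `W ⊆ L²` or `W ⊆ B`;
(ii) `W ⊆ B` iff `W ⊆ Z(L)`, in which case `dim W = 1`; and
(iii) `W ⊆ L²` iff `[W, L] = W`. -/
theorem minimal_ideal_location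
    {F L : Type*} [Field F] [AddCommGroup L] [Module F L] [FiniteDimensional F L]
    (A : LeibnizAlg F L) (hA : A.IsAAlgebra)
    (hcs : A.IsNilpotentSub (A.derSeries 1))
    (B : Submodule F L) (hB : A.IsSubalgebra B)
    (hdisj : A.derSeries 1 ⊓ B = ⊥) (hsup : A.derSeries 1 ⊔ B = ⊤)
    (W : Submodule F L) (hW : A.IsMinimalIdeal W) :
    (W ≤ A.derSeries 1 ∨ W ≤ B) ∧
    ((W ≤ B ↔ W ≤ A.centerOf ⊤) ∧ (W ≤ B → Module.finrank F W = 1)) ∧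
    (W ≤ A.derSeries 1 ↔ A.prod W ⊤ = W) := by
  have hZD := A.center_inf_der1 hA hcs B hB hdisj hsup
  have hZB := A.center_le_B hA hcs B hB hdisj hsup
  have hBB : ∀ b c : L, b ∈ B → c ∈ B → A.bracket b c = 0 := by
    intro b c hb hc
    have h1 : A.bracket b c ∈ A.derSeries 1 ⊓ B :=
      ⟨A.bracket_mem_der1 b c, hB (A.bracket_mem_prod hb hc)⟩
    rw [hdisj] at h1; simpa using h1
  have hbr0 : ∀ u v : L, u ∈ A.derSeries 1 → v ∈ A.derSeries 1 → A.bracket u v = 0 := by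
    intro u v hu hv
    have hab : A.prod (A.derSeries 1) (A.derSeries 1) = ⊥ :=
      hA _ (A.prod_le_der1 _ _) hcs
    have := A.bracket_mem_prod hu hv
    rw [hab] at this; simpa using this
  have hdecomp : ∀ x : L, ∃ u ∈ A.derSeries 1, ∃ b ∈ B, x = u + b := by
    intro x
    have hx : x ∈ A.derSeries 1 ⊔ B := by rw [hsup]; exact Submodule.mem_top
    obtain ⟨u, hu, b, hb, rfl⟩ := Submodule.mem_sup.mp hx
    exact ⟨u, hu, b, hb, rfl⟩
  -- (ii), forward direction
  have hWB_to_Z : W ≤ B → W ≤ A.centerOf ⊤ := by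
    intro hWB
    have hWd_bot : ∀ y ∈ W, y ∈ A.derSeries 1 → y = 0 := by
      intro y hy hyD
      have : y ∈ A.derSeries 1 ⊓ B := ⟨hyD, hWB hy⟩
      rw [hdisj] at this; simpa using this
    intro w hw
    rw [A.mem_center_iff]
    intro x
    constructor
    · exact hWd_bot _ (hW.1.1 (A.bracket_mem_prod hw Submodule.mem_top))
        (A.bracket_mem_der1 w x)
    · exact hWd_bot _ (hW.1.2 (A.bracket_mem_prod Submodule.mem_top hw))
        (A.bracket_mem_der1 x w)
  -- (i)
  have hcase : W ≤ A.derSeries 1 ∨ W ≤ A.centerOf ⊤ := by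
    have hWinf_ideal : A.IsIdeal (W ⊓ A.derSeries 1) := by
      constructor
      · exact le_inf (le_trans (A.prod_mono inf_le_left le_rfl) hW.1.1)
          (A.prod_le_der1 _ _)
      · exact le_inf (le_trans (A.prod_mono le_rfl inf_le_left) hW.1.2)
          (A.prod_le_der1 _ _)
    rcases hW.2.2 _ hWinf_ideal inf_le_left with hbot | heq
    · right
      intro w hw
      rw [A.mem_center_iff]
      intro x
      constructor
      · have : A.bracket w x ∈ W ⊓ A.derSeries 1 :=
          ⟨hW.1.1 (A.bracket_mem_prod hw Submodule.mem_top), A.bracket_mem_der1 w x⟩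
        rw [hbot] at this; simpa using this
      · have : A.bracket x w ∈ W ⊓ A.derSeries 1 :=
          ⟨hW.1.2 (A.bracket_mem_prod Submodule.mem_top hw), A.bracket_mem_der1 x w⟩
        rw [hbot] at this; simpa using this
    · left
      rw [← heq]
      exact inf_le_right
  refine ⟨hcase.imp id (fun h => le_trans h hZB), ⟨⟨hWB_to_Z, fun h => le_trans h hZB⟩, ?_⟩, ?_⟩
  · -- dimension one
    intro hWB
    have hWZ := hWB_to_Z hWB
    obtain ⟨w, hwW, hw0⟩ := (Submodule.ne_bot_iff W).mp hW.2.1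
    have hspan_le : Submodule.span F {w} ≤ W := by
      rw [Submodule.span_le, Set.singleton_subset_iff]; exact hwW
    have hspan_ideal : A.IsIdeal (Submodule.span F {w}) := by
      constructor
      · rw [LeibnizAlg.prod_le_iff]
        intro p hp x _
        rw [(A.mem_center_iff.mp (hWZ (hspan_le hp)) x).1]
        exact Submodule.zero_mem _
      · rw [LeibnizAlg.prod_le_iff]
        intro x _ p hp
        rw [(A.mem_center_iff.mp (hWZ (hspan_le hp)) x).2]
        exact Submodule.zero_mem _
    rcases hW.2.2 _ hspan_ideal hspan_le with h | h
    · exfalso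
      have : w ∈ Submodule.span F {w} := Submodule.mem_span_singleton_self w
      rw [h] at this
      exact hw0 (by simpa using this)
    · rw [← h]
      exact finrank_span_singleton hw0
  · -- (iii)
    constructor
    · intro hWD
      have hJ_ideal : A.IsIdeal (A.prod W ⊤) := by
        constructor
        · rw [LeibnizAlg.prod_le_iff]
          intro p hp y _
          have hsuff : A.prod W ⊤ ≤ Submodule.comap (A.bracket.flip y) (A.prod W ⊤) := by
            rw [LeibnizAlg.prod, Submodule.span_le]
            rintro z ⟨w, hw, x, -, rfl⟩
            rw [SetLike.mem_coe, Submodule.mem_comap, LinearMap.flip_apply]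
            have h := A.leibniz w x y
            have h2 : A.bracket (A.bracket w x) y
                = A.bracket w (A.bracket x y) + A.bracket (A.bracket w y) x := by
              rw [h]; abel
            rw [h2]
            refine Submodule.add_mem _ (A.bracket_mem_prod hw Submodule.mem_top) ?_
            exact A.bracket_mem_prod
              (hW.1.1 (A.bracket_mem_prod hw Submodule.mem_top)) Submodule.mem_top
          have := hsuff hp
          rwa [Submodule.mem_comap, LinearMap.flip_apply] at this
        · rw [LeibnizAlg.prod_le_iff]
          intro x _ p hp
          have hsuff : A.prod W ⊤ ≤ Submodule.comap (A.bracket x) (A.prod W ⊤) := by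
            rw [LeibnizAlg.prod, Submodule.span_le]
            rintro z ⟨w, hw, y, -, rfl⟩
            rw [SetLike.mem_coe, Submodule.mem_comap]
            rw [A.leibniz x w y, hbr0 _ _ (A.bracket_mem_der1 x y) (hWD hw), sub_zero]
            exact A.bracket_mem_prod
              (hW.1.2 (A.bracket_mem_prod Submodule.mem_top hw)) Submodule.mem_top
          exact hsuff hp
      rcases hW.2.2 _ hJ_ideal hW.1.1 with hJbot | hJW
      · exfalso
        have h1 : ∀ w ∈ W, ∀ x : L, A.bracket w x = 0 := by
          intro w hw x
          have := A.bracket_mem_prod hw (Submodule.mem_top (x := x))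
          rw [hJbot] at this; simpa using this
        have hprodU2 : A.prod (B ⊔ W) (B ⊔ W) ≤ W := by
          rw [LeibnizAlg.prod_le_iff]
          intro x hx y hy
          obtain ⟨b, hb, w, hw, rfl⟩ := Submodule.mem_sup.mp hx
          obtain ⟨c, hc, w', hw', rfl⟩ := Submodule.mem_sup.mp hy
          have hexp : A.bracket (b + w) (c + w') = A.bracket b w' := by
            simp only [map_add, LinearMap.add_apply]
            rw [hBB b c hb hc, h1 w hw c, h1 w hw w']
            abel
          rw [hexp]
          exact hW.1.2 (A.bracket_mem_prod Submodule.mem_top hw')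
        have hU2sub : A.IsSubalgebra (B ⊔ W) := le_trans hprodU2 le_sup_right
        have hU2nil : A.IsNilpotentSub (B ⊔ W) := by
          refine ⟨2, ?_⟩
          rw [A.lcs_two]
          refine le_antisymm ?_ bot_le
          refine le_trans (A.prod_mono hprodU2 le_top) ?_
          rw [hJbot]
        have hU2ab := hA _ hU2sub hU2nil
        have hWZ : W ≤ A.centerOf ⊤ := by
          intro w hw
          rw [A.mem_center_iff]
          intro x
          refine ⟨h1 w hw x, ?_⟩
          obtain ⟨u, hu, b, hb, rfl⟩ := hdecomp x
          have hwu : A.bracket u w = 0 := hbr0 u w hu (hWD hw)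
          have hwb : A.bracket b w = 0 := by
            have : A.bracket b w ∈ A.prod (B ⊔ W) (B ⊔ W) :=
              A.bracket_mem_prod (Submodule.mem_sup_left hb) (Submodule.mem_sup_right hw)
            rw [hU2ab] at this; simpa using this
          simp only [map_add, LinearMap.add_apply]
          rw [hwu, hwb, add_zero]
        have hle : W ≤ A.centerOf ⊤ ⊓ A.derSeries 1 := le_inf hWZ hWD
        rw [hZD] at hle
        exact hW.2.1 (le_bot_iff.mp hle)
      · exact hJW
    · intro h
      rw [← h]
      exact A.prod_le_der1 W ⊤
end

section
/- Let L be a cyclic Leibniz algebra of dimension n > 1 over a field F, generated by an element a, with basis a, a², …, aⁿ (where a^{k+1} = [a^k,a]) and [aⁿ,a] = α₂a² + … + αₙaⁿ. Then L is an A-algebra if and only if α₂ ≠ 0, and in that case L = L² ∔ F·(aⁿ − αₙa^{n−1} − … − α₂a). -/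
namespace LeibnizAlg

variable {F : Type*} {L : Type*} [Field F] [AddCommGroup L] [Module F L]

/-- Powers of an element: `apow a k = a^(k+1)`, i.e. `apow a 0 = a` and
`apow a (k+1) = [apow a k, a]`. -/
def apow (A : LeibnizAlg F L) (a : L) : ℕ → L
  | 0 => a
  | k + 1 => A.bracket (apow A a k) a

end LeibnizAlg

/-- Let `L` be a cyclic Leibniz algebra of dimension `n > 1` generated by
`a`, with basis `a, a², …, aⁿ` (where `a^(k+1) = [a^k, a]`), product determined by
`[aⁿ,a] = α₂a² + … + αₙaⁿ` and `[aⁱ,aʲ] = 0` for `j ≥ 2`.  Then `L` is an A-algebra iff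
`α₂ ≠ 0`, and in that case `L = L² ∔ F·(aⁿ − αₙa^{n−1} − … − α₂a)`. -/
theorem cyclic_leibniz_A_algebra_iff
    {F L : Type*} [Field F] [AddCommGroup L] [Module F L] [FiniteDimensional F L]
    (A : LeibnizAlg F L) (n : ℕ) (hn : 1 < n) (a : L)
    (hindep : LinearIndependent F (fun k : Fin n => A.apow a (k : ℕ)))
    (hspan : Submodule.span F (Set.range (fun k : Fin n => A.apow a (k : ℕ))) = ⊤)
    (α : ℕ → F)
    (hrel : A.apow a n = ∑ k ∈ Finset.Icc 2 n, α k • A.apow a (k - 1))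
    (hzero : ∀ i j : ℕ, 1 ≤ j → A.bracket (A.apow a i) (A.apow a j) = 0)
    (b : L) (hb : b = A.apow a (n - 1) - ∑ k ∈ Finset.Icc 2 n, α k • A.apow a (k - 2)) :
    (A.IsAAlgebra ↔ α 2 ≠ 0) ∧
    (α 2 ≠ 0 →
      A.derSeries 1 ⊓ Submodule.span F {b} = ⊥ ∧
      A.derSeries 1 ⊔ Submodule.span F {b} = ⊤) := by
    classical
  obtain ⟨m, rfl⟩ : ∃ m, n = m + 2 := ⟨n - 2, by omega⟩
  clear hn
  -- Setup: basis, right-multiplication operator R, coordinate functional c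
  have hsp : ⊤ ≤ Submodule.span F (Set.range fun k : Fin (m + 2) => A.apow a (k : ℕ)) :=
    hspan.ge
  set B : Module.Basis (Fin (m + 2)) F L := Module.Basis.mk hindep hsp with hB
  have hBapp : ∀ k : Fin (m + 2), B k = A.apow a (k : ℕ) := fun k => Module.Basis.mk_apply hindep hsp k
  set R : Module.End F L := A.bracket.flip a with hRdefn
  have hRdef : ∀ x : L, R x = A.bracket x a := fun x => rfl
  have hRapow : ∀ k : ℕ, R (A.apow a k) = A.apow a (k + 1) := fun k => rfl
  have hpowa : ∀ k : ℕ, (R ^ k) a = A.apow a k := by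
    intro k
    induction k with
    | zero => rfl
    | succ k ih => rw [pow_succ', Module.End.mul_apply, ih, hRapow]
  -- independence and spanning, ℕ-indexed
  have hind' : ∀ g : ℕ → F, (∑ i ∈ Finset.range (m + 2), g i • A.apow a i) = 0 →
      ∀ i, i < m + 2 → g i = 0 := by
    intro g hg i hi
    have h2 : ∑ k : Fin (m + 2), g (k : ℕ) • A.apow a (k : ℕ) = 0 := by
      rw [Fin.sum_univ_eq_sum_range (fun i => g i • A.apow a i) (m + 2)]; exact hg
    exact Fintype.linearIndependent_iff.mp hindep (fun k => g (k : ℕ)) h2 ⟨i, hi⟩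
  have hspan' : ∀ x : L, ∃ g : ℕ → F, x = ∑ i ∈ Finset.range (m + 2), g i • A.apow a i := by
    intro x
    have hx : x ∈ Submodule.span F (Set.range fun k : Fin (m + 2) => A.apow a (k : ℕ)) := by
      rw [hspan]; trivial
    obtain ⟨cf, hcf⟩ := (Submodule.mem_span_range_iff_exists_fun F).mp hx
    refine ⟨fun i => if h : i < m + 2 then cf ⟨i, h⟩ else 0, ?_⟩
    rw [← hcf, ← Fin.sum_univ_eq_sum_range
      (fun i => (if h : i < m + 2 then cf ⟨i, h⟩ else 0) • A.apow a i) (m + 2)]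
    refine Finset.sum_congr rfl fun k _ => ?_
    rw [dif_pos k.isLt]
  -- the defining relation, range-indexed
  have hrel' : A.apow a (m + 2) = ∑ i ∈ Finset.range (m + 1), α (i + 2) • A.apow a (i + 1) := by
    rw [hrel, ← Finset.Ico_add_one_right_eq_Icc, Finset.sum_Ico_eq_sum_range]
    have h1 : m + 2 + 1 - 2 = m + 1 := by omega
    rw [h1]
    refine Finset.sum_congr rfl fun i _ => ?_
    have h2 : 2 + i - 1 = i + 1 := by omega
    have h3 : 2 + i = i + 2 := by omega
    rw [h2, h3]
  have hb' : b = A.apow a (m + 1) - ∑ i ∈ Finset.range (m + 1), α (i + 2) • A.apow a i := by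
    rw [hb, ← Finset.Ico_add_one_right_eq_Icc, Finset.sum_Ico_eq_sum_range]
    have h1 : m + 2 + 1 - 2 = m + 1 := by omega
    rw [h1]
    congr 1
    refine Finset.sum_congr rfl fun i _ => ?_
    have h2 : 2 + i - 2 = i := by omega
    have h3 : 2 + i = i + 2 := by omega
    rw [h2, h3]
  -- coordinate functional
  set c : L →ₗ[F] F := B.coord ⟨0, by omega⟩ with hcdef
  have hcB : ∀ k : Fin (m + 2), c (B k) = if (k : ℕ) = 0 then 1 else 0 := by
    intro k
    rw [hcdef, Module.Basis.coord_apply, B.repr_self, Finsupp.single_apply]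
    by_cases h : (k : ℕ) = 0
    · simp [Fin.ext_iff, h]
    · simp [Fin.ext_iff, h, Ne.symm h]
  have hca : c a = 1 := by
    have := hcB ⟨0, by omega⟩
    rw [hBapp] at this
    simpa [LeibnizAlg.apow] using this
  have hck : ∀ k : ℕ, 1 ≤ k → k ≤ m + 2 → c (A.apow a k) = 0 := by
    have hck1 : ∀ k : ℕ, 1 ≤ k → k ≤ m + 1 → c (A.apow a k) = 0 := by
      intro k h1 h2
      have := hcB ⟨k, by omega⟩
      rw [hBapp] at this
      have hne : k ≠ 0 := by omega
      rw [this, if_neg hne]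
    intro k h1 h2
    rcases Nat.lt_or_ge k (m + 2) with h | h
    · exact hck1 k h1 (by omega)
    · have hk : k = m + 2 := by omega
      rw [hk, hrel', map_sum]
      refine Finset.sum_eq_zero fun i hi => ?_
      rw [map_smul, smul_eq_mul, hck1 (i + 1) (by omega)
        (by have := Finset.mem_range.mp hi; omega), mul_zero]
  have hcR : ∀ x : L, c (R x) = 0 := by
    have h : c ∘ₗ R = 0 := by
      apply B.ext
      intro k
      rw [LinearMap.comp_apply, hBapp, hRapow, LinearMap.zero_apply]
      exact hck _ (by omega) (by have := k.isLt; omega)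
    intro x
    have := LinearMap.congr_fun h x
    simpa using this
  have hbz : ∀ j : ℕ, 1 ≤ j → ∀ x : L, A.bracket x (A.apow a j) = 0 := by
    intro j hj
    have h : A.bracket.flip (A.apow a j) = 0 := by
      apply B.ext
      intro k
      rw [LinearMap.flip_apply, hBapp, LinearMap.zero_apply]
      exact hzero k j hj
    intro x
    have := LinearMap.congr_fun h x
    simpa using this
  -- the key bracket formula
  have hbrk : ∀ x y : L, A.bracket x y = c y • R x := by
    intro x
    have h : A.bracket x = c.smulRight (R x) := by
      apply B.ext
      intro k
      rw [hBapp, LinearMap.smulRight_apply]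
      rcases Nat.eq_zero_or_pos (k : ℕ) with h0 | h0
      · rw [h0]
        show A.bracket x (A.apow a 0) = c (A.apow a 0) • R x
        show A.bracket x a = c a • R x
        rw [hca, one_smul, hRdef]
      · rw [hbz _ h0 x, hck _ h0 (by have := k.isLt; omega), zero_smul]
    intro y
    have := LinearMap.congr_fun h y
    simpa using this
  -- derived algebra = range R
  have hder1 : A.derSeries 1 = LinearMap.range R := by
    apply le_antisymm
    · show A.prod (A.derSeries 0) (A.derSeries 0) ≤ _
      show A.prod ⊤ ⊤ ≤ _
      apply Submodule.span_le.mpr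
      rintro z ⟨x, -, y, -, rfl⟩
      rw [hbrk x y]
      exact ⟨c y • x, by rw [map_smul]⟩
    · rintro z ⟨y, rfl⟩
      exact Submodule.subset_span ⟨y, trivial, a, trivial, (hRdef y).symm⟩
  -- elements of range R
  have hrange : ∀ z : L, z ∈ LinearMap.range R →
      ∃ g : ℕ → F, z = ∑ i ∈ Finset.range (m + 1), g i • A.apow a (i + 1) := by
    rintro z ⟨y, rfl⟩
    obtain ⟨h, rfl⟩ := hspan' y
    refine ⟨fun i => h i + h (m + 1) * α (i + 2), ?_⟩
    rw [map_sum]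
    have e1 : ∀ i ∈ Finset.range (m + 2), R (h i • A.apow a i) = h i • A.apow a (i + 1) :=
      fun i _ => by rw [map_smul, hRapow]
    rw [Finset.sum_congr rfl e1, Finset.sum_range_succ, hrel', Finset.smul_sum]
    rw [← Finset.sum_add_distrib]
    refine Finset.sum_congr rfl fun i _ => ?_
    rw [smul_smul, ← add_smul]
  -- C1: R is injective on its range when α 2 ≠ 0
  have hC1 : α 2 ≠ 0 → ∀ z ∈ LinearMap.range R, R z = 0 → z = 0 := by
    intro hα z hz hRz
    obtain ⟨g, rfl⟩ := hrange z hz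
    have hcomp : R (∑ i ∈ Finset.range (m + 1), g i • A.apow a (i + 1)) =
        ∑ i ∈ Finset.range m, (g i + g m * α (i + 3)) • A.apow a (i + 2) +
          (g m * α 2) • A.apow a 1 := by
      rw [map_sum]
      have e1 : ∀ i ∈ Finset.range (m + 1), R (g i • A.apow a (i + 1)) =
          g i • A.apow a (i + 2) := fun i _ => by rw [map_smul, hRapow]
      rw [Finset.sum_congr rfl e1, Finset.sum_range_succ, hrel', Finset.smul_sum]
      have e2 : ∀ i ∈ Finset.range (m + 1), g m • (α (i + 2) • A.apow a (i + 1)) =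
          (g m * α (i + 2)) • A.apow a (i + 1) := fun i _ => by rw [smul_smul]
      rw [Finset.sum_congr rfl e2,
        Finset.sum_range_succ' (fun i => (g m * α (i + 2)) • A.apow a (i + 1)) m,
        ← add_assoc, ← Finset.sum_add_distrib]
      congr 1
      refine Finset.sum_congr rfl fun i _ => ?_
      rw [← add_smul]
    set G : ℕ → F := fun i =>
      (if 2 ≤ i then g (i - 2) + g m * α (i + 1) else if i = 1 then g m * α 2 else 0) with hG
    have hGsum : ∑ i ∈ Finset.range (m + 2), G i • A.apow a i = 0 := by
      rw [Finset.sum_range_succ' (fun i => G i • A.apow a i) (m + 1),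
        Finset.sum_range_succ' (fun i => G (i + 1) • A.apow a (i + 1)) m]
      have e3 : ∀ i ∈ Finset.range m, G (i + 1 + 1) • A.apow a (i + 1 + 1) =
          (g i + g m * α (i + 3)) • A.apow a (i + 2) := by
        intro i _
        rw [hG]
        simp only []
        rw [if_pos (by omega : 2 ≤ i + 1 + 1)]
        have h4 : i + 1 + 1 - 2 = i := by omega
        have h5 : i + 1 + 1 + 1 = i + 3 := by omega
        rw [h4, h5]
      rw [Finset.sum_congr rfl e3]
      have e4 : G (0 + 1) • A.apow a (0 + 1) = (g m * α 2) • A.apow a 1 := by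
        rw [hG]; norm_num
      have e5 : G 0 • A.apow a 0 = 0 := by rw [hG]; norm_num
      rw [e4, e5, add_zero, ← hcomp, hRz]
    have hg : ∀ i, i ≤ m → g i = 0 := by
      have hgm : g m = 0 := by
        have := hind' G hGsum 1 (by omega)
        rw [hG] at this
        norm_num at this
        rcases this with h | h
        · exact h
        · exact absurd h hα
      intro i hi
      rcases Nat.lt_or_ge i m with h | h
      · have := hind' G hGsum (i + 2) (by omega)
        rw [hG] at this
        simp only [if_pos (by omega : 2 ≤ i + 2)] at this
        have h4 : i + 2 - 2 = i := by omega
        rw [h4, hgm, zero_mul, add_zero] at this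
        exact this
      · have : i = m := by omega
        rw [this]; exact hgm
    refine Finset.sum_eq_zero fun i hi => ?_
    rw [hg i (by have := Finset.mem_range.mp hi; omega), zero_smul]
  -- iterated injectivity
  have hinj : α 2 ≠ 0 → ∀ N : ℕ, ∀ y : L, (R ^ (N + 1)) y = 0 → R y = 0 := by
    intro hα N
    induction N with
    | zero => intro y h; rw [pow_one] at h; exact h
    | succ N ih =>
      intro y h
      have h1 : (R ^ (N + 1)) (R y) = 0 := by
        rw [← Module.End.mul_apply, ← pow_succ]; exact h
      exact hC1 hα (R y) ⟨y, rfl⟩ (ih (R y) h1)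
  -- α 2 ≠ 0 implies A-algebra
  have hAalg : α 2 ≠ 0 → A.IsAAlgebra := by
    intro hα U hsubU hnilU
    obtain ⟨N, hN⟩ := hnilU
    have hNsucc : A.lcs U (N + 1) = ⊥ := by
      show A.prod (A.lcs U N) U = ⊥
      rw [hN]
      refine le_bot_iff.mp (Submodule.span_le.mpr ?_)
      rintro z ⟨x, hx, y, -, rfl⟩
      rw [(Submodule.mem_bot F).mp hx, map_zero, LinearMap.zero_apply]
      simp
    show A.prod U U = ⊥
    refine le_bot_iff.mp (Submodule.span_le.mpr ?_)
    by_cases hc : ∀ u ∈ U, c u = 0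
    · rintro z ⟨x, hx, y, hy, rfl⟩
      rw [hbrk, hc y hy, zero_smul]
      simp
    · push_neg at hc
      obtain ⟨u0, hu0U, hu0⟩ := hc
      have hru : ∀ u ∈ U, R u = 0 := by
        have hu1U : (c u0)⁻¹ • u0 ∈ U := Submodule.smul_mem _ _ hu0U
        set u1 : L := (c u0)⁻¹ • u0 with hu1
        have hcu1 : c u1 = 1 := by
          rw [hu1, map_smul, smul_eq_mul, inv_mul_cancel₀ hu0]
        have hstep : ∀ k : ℕ, ∀ u ∈ U, (R ^ (k + 1)) u ∈ A.lcs U (k + 1) := by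
          intro k
          induction k with
          | zero =>
            intro u hu
            have h1 : (R ^ 1) u = A.bracket u u1 := by
              rw [hbrk u u1, hcu1, one_smul, pow_one]
            rw [h1]
            exact Submodule.subset_span ⟨u, hu, u1, hu1U, rfl⟩
          | succ k ih =>
            intro u hu
            have h1 : (R ^ (k + 2)) u = A.bracket ((R ^ (k + 1)) u) u1 := by
              rw [hbrk, hcu1, one_smul, ← Module.End.mul_apply, ← pow_succ']
            rw [h1]
            exact Submodule.subset_span ⟨_, ih u hu, u1, hu1U, rfl⟩
        intro u hu
        refine hinj hα N u ?_
        have := hstep N u hu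
        rw [hNsucc] at this
        exact (Submodule.mem_bot F).mp this
      rintro z ⟨x, hx, y, hy, rfl⟩
      rw [hbrk, hru x hx, smul_zero]
      simp
  -- c value on b
  have hcb : c b = -(α 2) := by
    rw [hb', map_sub, map_sum, hck (m + 1) (by omega) (by omega)]
    have e1 : ∀ i ∈ Finset.range (m + 1), c (α (i + 2) • A.apow a i) =
        α (i + 2) * c (A.apow a i) := fun i _ => by rw [map_smul, smul_eq_mul]
    rw [Finset.sum_congr rfl e1,
      Finset.sum_range_succ' (fun i => α (i + 2) * c (A.apow a i)) m]
    have e2 : ∀ i ∈ Finset.range m, α (i + 1 + 2) * c (A.apow a (i + 1)) = 0 :=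
      fun i hi => by rw [hck (i + 1) (by omega) (by have := Finset.mem_range.mp hi; omega), mul_zero]
    rw [Finset.sum_congr rfl e2, Finset.sum_const_zero]
    show (0:F) - (0 + α (0 + 2) * c a) = -(α 2)
    rw [hca]
    ring
  -- Part 2
  have hpart2 : α 2 ≠ 0 →
      A.derSeries 1 ⊓ Submodule.span F {b} = ⊥ ∧
      A.derSeries 1 ⊔ Submodule.span F {b} = ⊤ := by
    intro hα
    constructor
    · rw [hder1]
      rw [Submodule.eq_bot_iff]
      rintro u ⟨hu1, hu2⟩
      obtain ⟨t, rfl⟩ := Submodule.mem_span_singleton.mp hu2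
      obtain ⟨y, hy⟩ := hu1
      have h1 : c (t • b) = 0 := by rw [← hy, hcR]
      rw [map_smul, smul_eq_mul, hcb] at h1
      have ht : t = 0 := by
        rcases mul_eq_zero.mp h1 with h | h
        · exact h
        · exact absurd (neg_eq_zero.mp h) hα
      rw [ht, zero_smul]
    · rw [hder1, eq_top_iff, ← hspan]
      apply Submodule.span_le.mpr
      rintro _ ⟨k, rfl⟩
      show A.apow a (k : ℕ) ∈ (↑(LinearMap.range R ⊔ Submodule.span F {b}) : Set L)
      rcases Nat.eq_zero_or_pos (k : ℕ) with h0 | h0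
      · -- a is in the sup
        rw [h0]
        have hsum : α 2 • a = A.apow a (m + 1) -
            (∑ i ∈ Finset.range m, α (i + 1 + 2) • A.apow a (i + 1)) - b := by
          rw [hb', Finset.sum_range_succ' (fun i => α (i + 2) • A.apow a i) m]
          show α 2 • a = A.apow a (m + 1) - (∑ i ∈ Finset.range m, α (i + 1 + 2) • A.apow a (i + 1)) -
            (A.apow a (m + 1) - ((∑ i ∈ Finset.range m, α (i + 1 + 2) • A.apow a (i + 1)) + α 2 • A.apow a 0))
          show α 2 • a = A.apow a (m + 1) - (∑ i ∈ Finset.range m, α (i + 1 + 2) • A.apow a (i + 1)) -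
            (A.apow a (m + 1) - ((∑ i ∈ Finset.range m, α (i + 1 + 2) • A.apow a (i + 1)) + α 2 • a))
          abel
        have hmem : α 2 • a ∈ LinearMap.range R ⊔ Submodule.span F {b} := by
          rw [hsum]
          refine Submodule.sub_mem _ (Submodule.sub_mem _ ?_ ?_) ?_
          · exact Submodule.mem_sup_left ⟨A.apow a m, hRapow m⟩
          · refine Submodule.sum_mem _ fun i _ => Submodule.smul_mem _ _ ?_
            exact Submodule.mem_sup_left ⟨A.apow a i, hRapow i⟩
          · exact Submodule.mem_sup_right (Submodule.mem_span_singleton_self b)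
        have : a = (α 2)⁻¹ • (α 2 • a) := by rw [smul_smul, inv_mul_cancel₀ hα, one_smul]
        show A.apow a 0 ∈ _
        show a ∈ _
        rw [this]
        exact Submodule.smul_mem _ _ hmem
      · obtain ⟨j, hj⟩ : ∃ j, (k : ℕ) = j + 1 := ⟨(k : ℕ) - 1, by omega⟩
        rw [hj]
        exact Submodule.mem_sup_left ⟨A.apow a j, hRapow _⟩
  -- Forward: if α 2 = 0 then L is not an A-algebra
  have hfwd : α 2 = 0 → ¬ A.IsAAlgebra := by
    intro hα hA
    have hpowv : ∀ k : ℕ, (R ^ k) (A.apow a 1) = A.apow a (k + 1) := by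
      intro k
      have h1 : A.apow a 1 = R a := rfl
      rw [h1, ← Module.End.mul_apply, ← pow_succ, hpowa]
    set v : L := A.apow a 1 with hv
    set p : Polynomial F := Polynomial.X ^ (m + 1) -
      ∑ i ∈ Finset.range (m + 1), Polynomial.C (α (i + 2)) * Polynomial.X ^ i with hp
    have hdegsum : (∑ i ∈ Finset.range (m + 1),
        Polynomial.C (α (i + 2)) * Polynomial.X ^ i).degree < ((m + 1 : ℕ) : WithBot ℕ) := by
      refine lt_of_le_of_lt (Polynomial.degree_sum_le _ _) ?_
      rw [Finset.sup_lt_iff (by exact_mod_cast WithBot.bot_lt_coe (m + 1))]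
      intro i hi
      refine lt_of_le_of_lt (Polynomial.degree_C_mul_X_pow_le _ _) ?_
      exact_mod_cast Finset.mem_range.mp hi
    have hmonic : p.Monic := Polynomial.monic_X_pow_sub hdegsum
    have hpne : p ≠ 0 := hmonic.ne_zero
    have hdp : p.degree = ((m + 1 : ℕ) : WithBot ℕ) := by
      rw [hp]
      rw [Polynomial.degree_sub_eq_left_of_degree_lt (by rw [Polynomial.degree_X_pow]; exact hdegsum)]
      exact Polynomial.degree_X_pow (m + 1)
    have hpaeval : (Polynomial.aeval R p) v = 0 := by
      rw [hp, map_sub, map_pow, Polynomial.aeval_X, LinearMap.sub_apply, map_sum,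
        LinearMap.sum_apply, hpowv]
      have e1 : ∀ i ∈ Finset.range (m + 1),
          ((Polynomial.aeval R) (Polynomial.C (α (i + 2)) * Polynomial.X ^ i)) v =
            α (i + 2) • A.apow a (i + 1) := by
        intro i _
        rw [map_mul, Polynomial.aeval_C, map_pow, Polynomial.aeval_X, Module.End.mul_apply,
          Module.algebraMap_end_apply, hpowv]
      rw [Finset.sum_congr rfl e1, ← hrel', sub_self]
    have hproot : p.IsRoot 0 := by
      show p.eval 0 = 0
      rw [hp, Polynomial.eval_sub, Polynomial.eval_pow, Polynomial.eval_X,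
        Polynomial.eval_finset_sum, zero_pow (by omega : m + 1 ≠ 0)]
      have e1 : ∀ i ∈ Finset.range (m + 1),
          Polynomial.eval 0 (Polynomial.C (α (i + 2)) * Polynomial.X ^ i) = α (i + 2) * 0 ^ i := by
        intro i _
        rw [Polynomial.eval_mul, Polynomial.eval_C, Polynomial.eval_pow, Polynomial.eval_X]
      rw [Finset.sum_congr rfl e1, Finset.sum_range_succ' (fun i => α (i + 2) * 0 ^ i) m]
      simp [hα]
    set mult := Polynomial.rootMultiplicity 0 p with hmultdef
    have hmult1 : 1 ≤ mult := (Polynomial.rootMultiplicity_pos hpne).mpr hproot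
    obtain ⟨q, hpq, hqnd⟩ := p.exists_eq_pow_rootMultiplicity_mul_and_not_dvd hpne 0
    rw [map_zero, sub_zero] at hpq hqnd
    have hcop : IsCoprime ((Polynomial.X : Polynomial F) ^ mult) q :=
      IsCoprime.pow_left ((Polynomial.irreducible_X.coprime_iff_not_dvd).mpr hqnd)
    obtain ⟨s, r, hsr⟩ := hcop
    -- key divisibility lemma
    have hKEY : ∀ g : Polynomial F, (Polynomial.aeval R g) v = 0 → p ∣ g := by
      intro g hg
      have hmod : (Polynomial.aeval R (g %ₘ p)) v = 0 := by
        have h1 : g %ₘ p = g - p * (g /ₘ p) := by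
          have h2 := Polynomial.modByMonic_add_div g p
          rw [eq_sub_iff_add_eq]; exact h2
        rw [h1, map_sub, LinearMap.sub_apply, hg, mul_comm p (g /ₘ p), map_mul,
          Module.End.mul_apply, hpaeval, map_zero, sub_zero]
      have hdlt : (g %ₘ p).degree < ((m + 1 : ℕ) : WithBot ℕ) := by
        rw [← hdp]; exact Polynomial.degree_modByMonic_lt g hmonic
      have hnatdeg : (g %ₘ p).natDegree < m + 1 := by
        rcases eq_or_ne (g %ₘ p) 0 with h | h
        · rw [h]; simp
        · exact (Polynomial.natDegree_lt_iff_degree_lt h).mpr hdlt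
      have hexp := Polynomial.aeval_eq_sum_range' hnatdeg R
      have hsum0 : ∑ i ∈ Finset.range (m + 1), (g %ₘ p).coeff i • A.apow a (i + 1) = 0 := by
        rw [← hmod, hexp, LinearMap.sum_apply]
        refine Finset.sum_congr rfl fun i _ => ?_
        rw [LinearMap.smul_apply, hpowv]
      set H : ℕ → F := fun i => if 1 ≤ i then (g %ₘ p).coeff (i - 1) else 0 with hH
      have hHsum : ∑ i ∈ Finset.range (m + 2), H i • A.apow a i = 0 := by
        rw [Finset.sum_range_succ' (fun i => H i • A.apow a i) (m + 1)]
        have e1 : ∀ i ∈ Finset.range (m + 1), H (i + 1) • A.apow a (i + 1) =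
            (g %ₘ p).coeff i • A.apow a (i + 1) := by
          intro i _
          rw [hH]
          simp
        rw [Finset.sum_congr rfl e1, hsum0]
        rw [hH]
        simp
      have hcoeff : ∀ i, (g %ₘ p).coeff i = 0 := by
        intro i
        rcases Nat.lt_or_ge i (m + 1) with h | h
        · have h3 := hind' H hHsum (i + 1) (by omega)
          rw [hH] at h3
          simpa using h3
        · exact Polynomial.coeff_eq_zero_of_natDegree_lt (lt_of_lt_of_le hnatdeg h)
      have h0 : g %ₘ p = 0 := Polynomial.ext fun i => by rw [hcoeff]; simp
      exact (Polynomial.modByMonic_eq_zero_iff_dvd hmonic).mp h0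
    set z : L := (Polynomial.aeval R (r * q)) v with hzdef
    have hrq : r * q = 1 - s * Polynomial.X ^ mult := by
      rw [← hsr]; ring
    have hzne : z ≠ 0 := by
      intro h0
      have hdvd : p ∣ r * q := hKEY (r * q) (by rw [← hzdef]; exact h0)
      have hXp : (Polynomial.X : Polynomial F) ∣ p := by
        rw [hpq]
        exact Dvd.dvd.mul_right (dvd_pow_self _ (by omega : mult ≠ 0)) q
      have hX1 : (Polynomial.X : Polynomial F) ∣ 1 - s * Polynomial.X ^ mult := by
        rw [← hrq]; exact hXp.trans hdvd
      have hXsm : (Polynomial.X : Polynomial F) ∣ s * Polynomial.X ^ mult :=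
        Dvd.dvd.mul_left (dvd_pow_self _ (by omega : mult ≠ 0)) s
      rw [Polynomial.X_dvd_iff] at hX1 hXsm
      rw [Polynomial.coeff_sub, hXsm, Polynomial.coeff_one] at hX1
      norm_num at hX1
    set w : L := -((Polynomial.aeval R (s * Polynomial.X ^ (mult - 1))) v) with hwdef
    set x : L := a + w with hxdef
    have hXmul : Polynomial.X * (s * Polynomial.X ^ (mult - 1)) = s * Polynomial.X ^ mult := by
      have h1 : (Polynomial.X : Polynomial F) ^ mult = Polynomial.X ^ (mult - 1) * Polynomial.X := by
        rw [← pow_succ]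
        congr 1
        omega
      rw [h1]; ring
    have hRaev : ∀ g : Polynomial F,
        R ((Polynomial.aeval R g) v) = (Polynomial.aeval R (Polynomial.X * g)) v := by
      intro g
      rw [map_mul, Polynomial.aeval_X, Module.End.mul_apply]
    have hRx : R x = z := by
      rw [hxdef, map_add, map_neg, hRaev, hXmul]
      have hRa : R a = v := rfl
      rw [hRa, hzdef, hrq, map_sub, LinearMap.sub_apply, map_one, Module.End.one_apply,
        sub_eq_add_neg]
    have hRmultz : (R ^ mult) z = 0 := by
      have h1 : (R ^ mult) z = (Polynomial.aeval R (Polynomial.X ^ mult * (r * q))) v := by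
        rw [map_mul, map_pow, Polynomial.aeval_X, Module.End.mul_apply, hzdef]
      have h2 : Polynomial.X ^ mult * (r * q) = r * p := by rw [hpq]; ring
      rw [h1, h2, map_mul, Module.End.mul_apply, hpaeval, map_zero]
    have hcv : ∀ g : Polynomial F, c ((Polynomial.aeval R g) v) = 0 := by
      intro g
      have h1 : (Polynomial.aeval R g) v = R ((Polynomial.aeval R g) a) := by
        have hva : v = R a := rfl
        calc (Polynomial.aeval R g) v = (Polynomial.aeval R g) (R a) := by rw [← hva]
          _ = (Polynomial.aeval R (g * Polynomial.X)) a := by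
              rw [map_mul, Polynomial.aeval_X, Module.End.mul_apply]
          _ = (Polynomial.aeval R (Polynomial.X * g)) a := by rw [mul_comm]
          _ = R ((Polynomial.aeval R g) a) := by
              rw [map_mul, Polynomial.aeval_X, Module.End.mul_apply]
      rw [h1, hcR]
    have hcx : c x = 1 := by
      rw [hxdef, map_add, hca, hwdef, map_neg, hcv, neg_zero, add_zero]
    have hbxx : A.bracket x x = z := by rw [hbrk, hcx, one_smul, hRx]
    set U : Submodule F L :=
      Submodule.span F ({x} ∪ Set.range fun j : ℕ => (R ^ j) z) with hU
    have hxU : x ∈ U := Submodule.subset_span (Or.inl rfl)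
    have hRgen : ∀ u ∈ U, R u ∈ U := by
      intro u hu
      induction hu using Submodule.span_induction with
      | mem y hy =>
        rcases hy with h | ⟨j, rfl⟩
        · rw [Set.mem_singleton_iff] at h
          rw [h, hRx]
          refine Submodule.subset_span (Or.inr ⟨0, ?_⟩)
          show (R ^ 0) z = z
          rw [pow_zero, Module.End.one_apply]
        · refine Submodule.subset_span (Or.inr ⟨j + 1, ?_⟩)
          show (R ^ (j + 1)) z = R ((R ^ j) z)
          rw [pow_succ', Module.End.mul_apply]
      | zero => rw [map_zero]; exact Submodule.zero_mem U
      | add y1 y2 h1 h2 ih1 ih2 => rw [map_add]; exact Submodule.add_mem U ih1 ih2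
      | smul t y hy ih => rw [map_smul]; exact Submodule.smul_mem U t ih
    have hsubU : A.IsSubalgebra U := by
      apply Submodule.span_le.mpr
      rintro _ ⟨u, hu, u', hu', rfl⟩
      rw [hbrk]
      exact Submodule.smul_mem U _ (hRgen u hu)
    have hkill : ∀ u ∈ U, (R ^ (mult + 1)) u = 0 := by
      intro u hu
      induction hu using Submodule.span_induction with
      | mem y hy =>
        rcases hy with h | ⟨j, rfl⟩
        · rw [Set.mem_singleton_iff] at h
          rw [h, pow_succ, Module.End.mul_apply, hRx, hRmultz]
        · rw [← Module.End.mul_apply, ← pow_add]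
          have h2 : mult + 1 + j = j + 1 + mult := by omega
          rw [h2, pow_add, Module.End.mul_apply, hRmultz, map_zero]
      | zero => rw [map_zero]
      | add y1 y2 h1 h2 ih1 ih2 => rw [map_add, ih1, ih2, add_zero]
      | smul t y hy ih => rw [map_smul, ih, smul_zero]
    have hlcs : ∀ k : ℕ, A.lcs U k ≤ Submodule.map (R ^ k) U := by
      intro k
      induction k with
      | zero =>
        show U ≤ Submodule.map (R ^ 0) U
        rw [pow_zero]
        intro u hu
        exact ⟨u, hu, rfl⟩
      | succ k ih =>
        show A.prod (A.lcs U k) U ≤ _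
        apply Submodule.span_le.mpr
        rintro _ ⟨u, hu, u', hu', rfl⟩
        obtain ⟨u0, hu0, rfl⟩ := ih hu
        rw [hbrk]
        refine ⟨c u' • u0, Submodule.smul_mem U _ hu0, ?_⟩
        rw [map_smul]
        congr 1
        rw [← Module.End.mul_apply, ← pow_succ']
    have hnilU : A.IsNilpotentSub U := by
      refine ⟨mult + 1, ?_⟩
      rw [← le_bot_iff]
      refine le_trans (hlcs (mult + 1)) ?_
      rintro _ ⟨u, hu, rfl⟩
      rw [hkill u hu]
      exact Submodule.zero_mem ⊥
    have habU : A.prod U U = ⊥ := hA U hsubU hnilU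
    have hzin : z ∈ A.prod U U := Submodule.subset_span ⟨x, hxU, x, hxU, hbxx.symm⟩
    rw [habU] at hzin
    exact hzne ((Submodule.mem_bot F).mp hzin)
  -- assemble
  refine ⟨⟨fun hA => ?_, hAalg⟩, hpart2⟩
  by_contra h
  exact hfwd h hA
end
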